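/- There do not exist a ∈ ℝ^4 and B = (b_{ij}) ∈ ℝ^{4×4} with a_1 > 0, a_2 < 0, a_3 < 0, a_4 < 0, b_{ii} > 0 for all i, b_{1j} > 0 and b_{j1} > 0 for j ∈ {2,3,4}, and b_{jk} < 0 for all j ≠ k with j,k ∈ {2,3,4}, such that the pair (a,B) is feasible-stable. In other words, the four-species network in which one growing species competes with three dying species that are pairwise obligate mutualists is an impossible ecology. -/

import Mathlib

open Matrix Polynomial

/-- A real square matrix is Hurwitz-stable if every complex root of its characteristic
polynomial has negative real part. -/
def HurwitzStable {n : ℕ} (M : Matrix (Fin n) (Fin n) ℝ) : Prop :=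
  ∀ z : ℂ, aeval z M.charpoly = 0 → z.re < 0

/-- `(a, B)` is feasible-stable if every entry of `adj(B)·a` is positive and
`-diag(adj(B)·a)·B` is Hurwitz-stable. -/
def FeasibleStable {n : ℕ} (a : Fin n → ℝ) (B : Matrix (Fin n) (Fin n) ℝ) : Prop :=
  (∀ i, 0 < B.adjugate.mulVec a i) ∧
    HurwitzStable (-(Matrix.diagonal (B.adjugate.mulVec a) * B))

namespace ImpossibleEcologyAux

open Filter

abbrev Mat4 := Matrix (Fin 4) (Fin 4) ℝ


lemma eval_charpoly' {n : ℕ} (M : Matrix (Fin n) (Fin n) ℝ) (t : ℝ) :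
    M.charpoly.eval t = Matrix.det (t • (1 : Matrix (Fin n) (Fin n) ℝ) - M) := by
  rw [Matrix.charpoly]
  rw [show Polynomial.eval t M.charmatrix.det = (Polynomial.evalRingHom t) M.charmatrix.det from rfl,
    RingHom.map_det]
  congr 1
  ext i j
  rcases eq_or_ne i j with rfl | hij
  · simp [Matrix.charmatrix_apply_eq, Matrix.one_apply]
  · simp [Matrix.charmatrix_apply_ne _ _ _ hij, Matrix.one_apply, hij]

lemma continuous_finset_inf' {ι : Type*} (s : Finset ι) (hs : s.Nonempty) (f : ι → ℝ → ℝ)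
    (hf : ∀ i, Continuous (f i)) : Continuous fun t => s.inf' hs fun i => f i t := by
  induction hs using Finset.Nonempty.cons_induction with
  | singleton i => simpa using hf i
  | cons i s his hs ih =>
    have : (fun t => (Finset.cons i s his).inf' (Finset.cons_nonempty his) fun j => f j t)
        = fun t => min (f i t) (s.inf' hs fun j => f j t) := by
      funext t; rw [Finset.inf'_cons]
    rw [this]
    exact (hf i).min ih

lemma ev_quad (a b c : ℝ) (ha : 0 < a) : ∀ᶠ t in atTop, 0 < a * t ^ 2 + b * t + c := by
  rw [Filter.eventually_atTop]
  refine ⟨max 1 ((|b| + |c| + 1) / a), fun t ht => ?_⟩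
  have h1 : (1:ℝ) ≤ t := le_trans (le_max_left _ _) ht
  have h2 : (|b| + |c| + 1) / a ≤ t := le_trans (le_max_right _ _) ht
  have h3 : |b| + |c| + 1 ≤ a * t := by
    rw [div_le_iff₀ ha] at h2; linarith [mul_comm t a]
  have hb := neg_abs_le b
  have hc := neg_abs_le c
  nlinarith [abs_nonneg b, abs_nonneg c]

lemma ev_cubic (b c d : ℝ) : ∀ᶠ t in atTop, 0 < t ^ 3 + b * t ^ 2 + c * t + d := by
  rw [Filter.eventually_atTop]
  refine ⟨1 + |b| + |c| + |d|, fun t ht => ?_⟩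
  have h1 : (1:ℝ) ≤ t := by
    have := abs_nonneg b; have := abs_nonneg c; have := abs_nonneg d; linarith
  have hb := neg_abs_le b
  have hc := neg_abs_le c
  have hd := neg_abs_le d
  nlinarith [abs_nonneg b, abs_nonneg c, abs_nonneg d, sq_nonneg t]


lemma adj_pos_of_nonneg (A : Mat4)
    (hoff : ∀ i j, i ≠ j → 0 < A i j) (t : ℝ) (ht : 0 ≤ t)
    (hdet : 0 < Matrix.det (t • (1:Mat4) - A))
    (hadj : ∀ i j, 0 ≤ (t • (1:Mat4) - A).adjugate i j) :
    ∀ i j, 0 < (t • (1:Mat4) - A).adjugate i j := by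
  set N : Mat4 := t • (1:Mat4) - A with hN
  set G : Mat4 := N.adjugate with hG
  set c : ℝ := 1 + ∑ i, |A i i| with hc
  set P : Mat4 := c • 1 + A with hP
  have habs : ∀ i : Fin 4, |A i i| ≤ ∑ k, |A k k| :=
    fun i => Finset.single_le_sum (fun k _ => abs_nonneg (A k k)) (Finset.mem_univ i)
  have habs0 : 0 ≤ ∑ k, |A k k| := Finset.sum_nonneg fun k _ => abs_nonneg (A k k)
  have hPpos : ∀ i j, 0 < P i j := by
    intro i j
    rcases eq_or_ne i j with rfl | hij
    · have h1 : P i i = c + A i i := by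
        simp [hP, Matrix.add_apply, Matrix.smul_apply, Matrix.one_apply_eq]
      rw [h1, hc]
      linarith [neg_abs_le (A i i), habs i]
    · have h1 : P i j = A i j := by
        simp [hP, Matrix.add_apply, Matrix.smul_apply, Matrix.one_apply_ne hij]
      rw [h1]; exact hoff i j hij
  set s : ℝ := t + c with hs
  have hspos : 0 < s := by rw [hs, hc]; linarith
  have hNs : N = s • (1:Mat4) - P := by
    ext i j
    simp only [hN, hP, hs, Matrix.sub_apply, Matrix.add_apply, Matrix.smul_apply, smul_eq_mul]
    ring
  have hGN : G * N = N.det • 1 := Matrix.adjugate_mul N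
  have h1 : s • G - G * P = N.det • (1:Mat4) := by
    rw [← hGN, hNs, Matrix.mul_sub, Matrix.mul_smul, Matrix.mul_one]
  have entry : ∀ i j, s * G i j = N.det * (1:Mat4) i j + ∑ k, G i k * P k j := by
    intro i j
    have h2 := congrFun (congrFun h1 i) j
    simp only [Matrix.sub_apply, Matrix.smul_apply, Matrix.mul_apply, smul_eq_mul] at h2
    linarith [h2]
  have hsum_nonneg : ∀ i j, 0 ≤ ∑ k, G i k * P k j := by
    intro i j
    exact Finset.sum_nonneg fun k _ => mul_nonneg (hadj i k) (hPpos k j).le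
  have hdiag : ∀ i, 0 < G i i := by
    intro i
    have h3 := entry i i
    have h4 : 0 < s * G i i := by
      rw [h3, Matrix.one_apply_eq]
      have := hsum_nonneg i i
      nlinarith
    by_contra hcon
    push_neg at hcon
    nlinarith
  intro i j
  have h3 := entry i j
  have h5 : G i i * P i j ≤ ∑ k, G i k * P k j :=
    Finset.single_le_sum (fun k _ => mul_nonneg (hadj i k) (hPpos k j).le) (Finset.mem_univ i)
  have h6 : 0 < s * G i j := by
    have h7 : 0 ≤ N.det * (1:Mat4) i j := by
      rcases eq_or_ne i j with rfl | hij
      · rw [Matrix.one_apply_eq]; positivity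
      · rw [Matrix.one_apply_ne hij]; simp
    nlinarith [mul_pos (hdiag i) (hPpos i j)]
  by_contra hcon
  push_neg at hcon
  nlinarith

lemma det_pos_on_nonneg (M : Mat4)
    (hno : ∀ t : ℝ, 0 ≤ t → Matrix.det (t • (1:Mat4) - M) ≠ 0) :
    ∀ t : ℝ, 0 ≤ t → 0 < Matrix.det (t • (1:Mat4) - M) := by
  have hdeg : M.charpoly.natDegree = 4 := by simpa using M.charpoly_natDegree_eq_dim
  have hmon : M.charpoly.Monic := M.charpoly_monic
  have hfd : ∀ t : ℝ, M.charpoly.eval t = Matrix.det (t • (1:Mat4) - M) :=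
    fun t => eval_charpoly' M t
  have hftop : Tendsto (fun t => M.charpoly.eval t) atTop atTop := by
    apply Polynomial.tendsto_atTop_of_leadingCoeff_nonneg
    · rw [Polynomial.degree_eq_natDegree hmon.ne_zero, hdeg]; norm_num
    · rw [hmon.leadingCoeff]; norm_num
  have hfcont : Continuous fun t : ℝ => M.charpoly.eval t := Polynomial.continuous _
  intro t ht
  rw [← hfd]
  by_contra hle
  push_neg at hle
  have hne : M.charpoly.eval t ≠ 0 := by rw [hfd]; exact hno t ht
  have hlt : M.charpoly.eval t < 0 := lt_of_le_of_ne hle hne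
  obtain ⟨t1, hf1, htt1⟩ := ((hftop.eventually_gt_atTop 0).and (eventually_ge_atTop t)).exists
  have hsub := intermediate_value_Icc htt1 hfcont.continuousOn
  obtain ⟨u, hu, hu0⟩ := hsub ⟨hlt.le, hf1.le⟩
  exact hno u (le_trans ht hu.1) (by rw [← hfd]; exact hu0)

lemma metzler_nonneg_root (A : Mat4)
    (hoff : ∀ i j, i ≠ j → 0 < A i j)
    (w : Fin 4 → ℝ) (hw : ∀ i, 0 < w i) (hAw : ∀ i, 0 < A.mulVec w i) :
    ∃ t : ℝ, 0 ≤ t ∧ Matrix.det (t • (1:Mat4) - A) = 0 := by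
  by_contra hcon
  push_neg at hcon
  have hdeg : A.charpoly.natDegree = 4 := by
    simpa using A.charpoly_natDegree_eq_dim
  have hmon : A.charpoly.Monic := A.charpoly_monic
  have hfd : ∀ t : ℝ, A.charpoly.eval t = Matrix.det (t • (1:Mat4) - A) :=
    fun t => eval_charpoly' A t
  have hftop : Tendsto (fun t => A.charpoly.eval t) atTop atTop := by
    apply Polynomial.tendsto_atTop_of_leadingCoeff_nonneg
    · rw [Polynomial.degree_eq_natDegree hmon.ne_zero, hdeg]; norm_num
    · rw [hmon.leadingCoeff]; norm_num
  have hfcont : Continuous fun t : ℝ => A.charpoly.eval t := by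
    exact Polynomial.continuous _
  have hfpos : ∀ t : ℝ, 0 ≤ t → 0 < A.charpoly.eval t := by
    intro t ht
    by_contra hle
    push_neg at hle
    have hne : A.charpoly.eval t ≠ 0 := by rw [hfd]; exact hcon t ht
    have hlt : A.charpoly.eval t < 0 := lt_of_le_of_ne hle hne
    obtain ⟨t1, hf1, htt1⟩ := ((hftop.eventually_gt_atTop 0).and (eventually_ge_atTop t)).exists
    have hsub := intermediate_value_Icc htt1 hfcont.continuousOn
    have h0 : (0:ℝ) ∈ Set.Icc (A.charpoly.eval t) (A.charpoly.eval t1) := ⟨hlt.le, hf1.le⟩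
    obtain ⟨u, hu, hu0⟩ := hsub h0
    have : u ≥ 0 := le_trans ht hu.1
    exact hcon u this (by rw [← hfd]; exact hu0)
  -- coefficients
  set c0 : ℝ := A.charpoly.coeff 0 with hc0
  set c1 : ℝ := A.charpoly.coeff 1 with hc1
  set c2 : ℝ := A.charpoly.coeff 2 with hc2
  set c3 : ℝ := A.charpoly.coeff 3 with hc3
  have hc4 : A.charpoly.coeff 4 = 1 := by
    have h := hmon.coeff_natDegree
    rw [hdeg] at h; exact h
  -- Cayley-Hamilton
  have hsum : c0 • (1:Mat4) + c1 • A + c2 • A^2 + c3 • A^3 + A^4 = 0 := by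
    have h := A.aeval_self_charpoly
    rw [Polynomial.aeval_eq_sum_range, hdeg] at h
    simp only [Finset.sum_range_succ, Finset.sum_range_zero, zero_add, hc4, one_smul,
      pow_zero, pow_one] at h
    exact h
  have hA4 : A^4 = -(c0 • (1:Mat4) + c1 • A + c2 • A^2 + c3 • A^3) := by
    have h2 : A^4 + (c0 • (1:Mat4) + c1 • A + c2 • A^2 + c3 • A^3) = 0 := by
      rw [← hsum]; abel
    exact eq_neg_of_add_eq_zero_left h2
  -- the polynomial matrix Q t with (t•1 - A) * Q t = (eval t charpoly) • 1
  set Q : ℝ → Mat4 := fun t =>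
    (t^3 + c3*t^2 + c2*t + c1) • (1:Mat4) + (t^2 + c3*t + c2) • A + (t + c3) • A^2 + A^3
    with hQdef
  have heval : ∀ t : ℝ, A.charpoly.eval t = c0 + c1*t + c2*t^2 + c3*t^3 + t^4 := by
    intro t
    rw [Polynomial.eval_eq_sum_range, hdeg]
    simp only [Finset.sum_range_succ, Finset.sum_range_zero, zero_add, hc4, pow_zero, pow_one]
    ring
  have hQ : ∀ t : ℝ, (t • (1:Mat4) - A) * Q t = (A.charpoly.eval t) • (1:Mat4) := by
    intro t
    rw [heval t, hQdef]
    simp only [sub_mul, mul_add, add_mul, Matrix.smul_mul, Matrix.mul_smul, Matrix.one_mul,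
      Matrix.mul_one, smul_smul]
    have e2 : A * A = A^2 := by rw [pow_two]
    have e3 : A * A^2 = A^3 := by rw [← pow_succ']
    have e4 : A * A^3 = A^4 := by rw [← pow_succ']
    rw [e2, e3, e4, hA4]
    module
  -- eventually all entries of Q t are positive
  have hQentry : ∀ i j : Fin 4, ∀ᶠ t in atTop, 0 < Q t i j := by
    intro i j
    rcases eq_or_ne i j with rfl | hij
    · filter_upwards [ev_cubic (c3 + A i i) (c2 + c3 * A i i + (A^2) i i)
        (c1 + c2 * A i i + c3 * (A^2) i i + (A^3) i i)] with t ht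
      have he : Q t i i = t^3 + (c3 + A i i)*t^2 + (c2 + c3 * A i i + (A^2) i i)*t
          + (c1 + c2 * A i i + c3 * (A^2) i i + (A^3) i i) := by
        simp only [hQdef, Matrix.add_apply, Matrix.smul_apply, Matrix.one_apply_eq, smul_eq_mul]
        ring
      rw [he]; exact ht
    · filter_upwards [ev_quad (A i j) (c3 * A i j + (A^2) i j)
        (c2 * A i j + c3 * (A^2) i j + (A^3) i j) (hoff i j hij)] with t ht
      have he : Q t i j = (A i j) * t^2 + (c3 * A i j + (A^2) i j)*t
          + (c2 * A i j + c3 * (A^2) i j + (A^3) i j) := by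
        simp only [hQdef, Matrix.add_apply, Matrix.smul_apply, Matrix.one_apply_ne hij,
          smul_eq_mul]
        ring
      rw [he]; exact ht
  obtain ⟨t1, hQ1, ht1⟩ :=
    ((Filter.eventually_all.mpr fun i : Fin 4 =>
        Filter.eventually_all.mpr fun j : Fin 4 => hQentry i j).and
      (eventually_ge_atTop (0:ℝ))).exists
  -- at t1 the adjugate equals Q t1
  have hdet1 : (t1 • (1:Mat4) - A).det ≠ 0 := hcon t1 ht1
  have hNinv : IsUnit (t1 • (1:Mat4) - A).det := isUnit_iff_ne_zero.mpr hdet1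
  have hadjQ : (t1 • (1:Mat4) - A).adjugate = Q t1 := by
    have h1 : (t1 • (1:Mat4) - A) * (t1 • (1:Mat4) - A).adjugate
        = (t1 • (1:Mat4) - A) * Q t1 := by
      rw [Matrix.mul_adjugate, hQ t1, hfd]
    have h3 := congrArg (fun X : Mat4 => (t1 • (1:Mat4) - A)⁻¹ * X) h1
    simpa only [← Matrix.mul_assoc, Matrix.nonsing_inv_mul _ hNinv, Matrix.one_mul] using h3
  -- continuity of the minimum-entry function of the adjugate
  set F : ℝ → Mat4 := fun t => (t • (1:Mat4) - A).adjugate with hF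
  have hFcont : Continuous F := by
    apply Continuous.matrix_adjugate
    exact (continuous_id.smul continuous_const).sub continuous_const
  set h : ℝ → ℝ := fun t =>
    (Finset.univ : Finset (Fin 4 × Fin 4)).inf' Finset.univ_nonempty (fun q => F t q.1 q.2)
    with hh
  have hcont : Continuous h :=
    continuous_finset_inf' _ _ _ (fun q => hFcont.matrix_elem q.1 q.2)
  have hkey : ∀ t : ℝ, 0 ≤ t → (∀ i j, 0 ≤ F t i j) → (∀ i j, 0 < F t i j) := by
    intro t ht hnn
    exact adj_pos_of_nonneg A hoff t ht (by rw [← hfd]; exact hfpos t ht) hnn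
  have hF1 : ∀ i j, 0 < F t1 i j := by
    intro i j; rw [hF]; simp only []; rw [hadjQ]; exact hQ1 i j
  have ht1pos : 0 < h t1 := by
    obtain ⟨q, _, hq⟩ := Finset.exists_mem_eq_inf' Finset.univ_nonempty
      (fun q : Fin 4 × Fin 4 => F t1 q.1 q.2)
    rw [hh]; simp only []; rw [hq]; exact hF1 q.1 q.2
  have hpos : ∀ t : ℝ, 0 ≤ t → t ≤ t1 → 0 < h t := by
    intro t0 h0 h01
    by_contra hle
    push_neg at hle
    have hsub := intermediate_value_Icc h01 hcont.continuousOn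
    obtain ⟨u, hu, hu0⟩ := hsub ⟨hle, ht1pos.le⟩
    have hunn : 0 ≤ u := le_trans h0 hu.1
    have hge : ∀ i j, 0 ≤ F u i j := by
      intro i j
      have h2 : h u ≤ F u i j := Finset.inf'_le _ (Finset.mem_univ ((i, j) : Fin 4 × Fin 4))
      rw [hu0] at h2; exact h2
    have h4 := hkey u hunn hge
    obtain ⟨q, _, hq⟩ := Finset.exists_mem_eq_inf' Finset.univ_nonempty
      (fun q : Fin 4 × Fin 4 => F u q.1 q.2)
    have : h u = F u q.1 q.2 := hq
    rw [hu0] at this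
    exact absurd this.symm (ne_of_gt (h4 q.1 q.2))
  -- entries of adjugate(-A) are nonnegative
  have hF0 : ∀ i j, 0 ≤ F 0 i j := by
    intro i j
    have h2 : h 0 ≤ F 0 i j := Finset.inf'_le _ (Finset.mem_univ ((i, j) : Fin 4 × Fin 4))
    exact le_trans (hpos 0 le_rfl ht1).le h2
  -- final contradiction via w
  have hadjrel : F 0 * ((0:ℝ) • (1:Mat4) - A) = ((0:ℝ) • (1:Mat4) - A).det • 1 :=
    Matrix.adjugate_mul _
  have h5 : (F 0).mulVec (((0:ℝ) • (1:Mat4) - A).mulVec w)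
      = (((0:ℝ) • (1:Mat4) - A).det) • w := by
    rw [Matrix.mulVec_mulVec, hadjrel, Matrix.smul_mulVec, Matrix.one_mulVec]
  have h6 := congrFun h5 0
  have hdet0 : 0 < ((0:ℝ) • (1:Mat4) - A).det := by rw [← hfd]; exact hfpos 0 le_rfl
  have hneg : ∀ k, ((0:ℝ) • (1:Mat4) - A).mulVec w k < 0 := by
    intro k
    have hz : (0:ℝ) • (1:Mat4) - A = -A := by simp
    rw [hz, Matrix.neg_mulVec]
    simpa using hAw k
  have hL : (F 0).mulVec (((0:ℝ) • (1:Mat4) - A).mulVec w) 0 ≤ 0 := by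
    rw [Matrix.mulVec, dotProduct]
    apply Finset.sum_nonpos
    intro k _
    exact mul_nonpos_of_nonneg_of_nonpos (hF0 0 k) (hneg k).le
  have hR : 0 < ((((0:ℝ) • (1:Mat4) - A).det) • w) 0 := by
    simp only [Pi.smul_apply, smul_eq_mul]
    exact mul_pos hdet0 (hw 0)
  rw [h6] at hL
  exact absurd hR (not_lt.mpr hL)

end ImpossibleEcologyAux

open ImpossibleEcologyAux

set_option maxHeartbeats 2000000 in
/-- **Impossible four-species ecology:** one growing species (species `0`, 0-based)
competing with three dying species that are pairwise obligate mutualists. -/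
theorem competitor_with_three_mutualists_impossible :
    ¬ ∃ (a : Fin 4 → ℝ) (B : Matrix (Fin 4) (Fin 4) ℝ),
      0 < a 0 ∧ a 1 < 0 ∧ a 2 < 0 ∧ a 3 < 0 ∧
      (∀ i, 0 < B i i) ∧
      (∀ j : Fin 4, j ≠ 0 → 0 < B 0 j ∧ 0 < B j 0) ∧
      (∀ j k : Fin 4, j ≠ 0 → k ≠ 0 → j ≠ k → B j k < 0) ∧
      FeasibleStable a B := by
  rintro ⟨a, B, ha0, ha1, ha2, ha3, hdiag, hrow0, hoffneg, hx, hHur⟩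
  set x : Fin 4 → ℝ := B.adjugate.mulVec a with hxdef
  set M : Mat4 := -(Matrix.diagonal x * B) with hMdef
  clear_value x M
  have hMe : ∀ i j, M i j = -(x i * B i j) := by
    intro i j
    simp [hMdef, Matrix.mul_apply, Matrix.diagonal_apply, Finset.sum_ite_eq,
      Matrix.neg_apply]
  -- Hurwitz implies no nonnegative real root of det (t•1 - M)
  have hnoroot : ∀ t : ℝ, 0 ≤ t → Matrix.det (t • (1:Mat4) - M) ≠ 0 := by
    intro t ht h0
    have h1 : M.charpoly.eval t = 0 := by rw [eval_charpoly']; exact h0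
    have h2 : aeval ((t : ℝ) : ℂ) M.charpoly = 0 := by
      have h3 := Polynomial.aeval_algebraMap_apply_eq_algebraMap_eval (A := ℂ) t M.charpoly
      rw [h1] at h3
      simpa using h3
    have h4 := hHur ((t : ℝ) : ℂ) h2
    rw [Complex.ofReal_re] at h4
    linarith
  have hdetpos := det_pos_on_nonneg M hnoroot
  -- determinant of B is positive
  have hprod : 0 < ∏ i, x i := Finset.prod_pos fun i _ => hx i
  have hdetM : 0 < (∏ i, x i) * B.det := by
    have h1 := hdetpos 0 le_rfl
    have h2 : (0:ℝ) • (1:Mat4) - M = Matrix.diagonal x * B := by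
      rw [hMdef]; simp
    rw [h2, Matrix.det_mul, Matrix.det_diagonal] at h1
    exact h1
  have hdetB : 0 < B.det := by
    by_contra hle
    push_neg at hle
    have h2 : (∏ i, x i) * B.det ≤ 0 := mul_nonpos_of_nonneg_of_nonpos hprod.le hle
    linarith
  -- B x = det B • a
  have hBx : B.mulVec x = B.det • a := by
    rw [hxdef, Matrix.mulVec_mulVec, Matrix.mul_adjugate, Matrix.smul_mulVec,
      Matrix.one_mulVec]
  have hrow : ∀ j : Fin 4, j ≠ 0 → a j < 0 →
      B j 1 * x 1 + B j 2 * x 2 + B j 3 * x 3 < 0 := by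
    intro j hj haj
    have h1 := congrFun hBx j
    rw [Matrix.mulVec, dotProduct, Fin.sum_univ_four] at h1
    simp only [Pi.smul_apply, smul_eq_mul] at h1
    have h2 : B.det * a j < 0 := mul_neg_of_pos_of_neg hdetB haj
    have h3 : 0 < B j 0 * x 0 := mul_pos (hrow0 j hj).2 (hx 0)
    linarith
  -- the sign-conjugated matrix A
  set σ : Fin 4 → ℝ := ![-1, 1, 1, 1] with hσdef
  set S : Mat4 := Matrix.diagonal σ with hSdef
  have hSS : S * S = 1 := by
    rw [hSdef, Matrix.diagonal_mul_diagonal]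
    have h1 : (fun i => σ i * σ i) = fun _ => (1:ℝ) := by
      funext i; fin_cases i <;> norm_num [hσdef]
    rw [h1, Matrix.diagonal_one]
  set A : Mat4 := S * M * S with hAdef
  clear_value σ S A
  have hAe : ∀ i j, A i j = σ i * M i j * σ j := by
    intro i j
    rw [hAdef, hSdef, Matrix.mul_diagonal, Matrix.diagonal_mul]
  -- determinants agree
  have hdet_conj : ∀ t : ℝ, Matrix.det (t • (1:Mat4) - A) = Matrix.det (t • (1:Mat4) - M) := by
    intro t
    have h1 : t • (1:Mat4) - A = S * (t • (1:Mat4) - M) * S := by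
      rw [Matrix.mul_sub, Matrix.sub_mul, Matrix.mul_smul, Matrix.mul_one, Matrix.smul_mul, hSS,
        hAdef]
    have hdS : S.det = -1 := by
      rw [hSdef, Matrix.det_diagonal, Fin.prod_univ_four]
      norm_num [hσdef, Matrix.cons_val_two, Matrix.cons_val_three]
    rw [h1, Matrix.det_mul, Matrix.det_mul, hdS]
    ring
  -- off-diagonal entries of A are positive
  have hB01 : 0 < B 0 1 := (hrow0 1 (by decide)).1
  have hB02 : 0 < B 0 2 := (hrow0 2 (by decide)).1
  have hB03 : 0 < B 0 3 := (hrow0 3 (by decide)).1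
  have hB10 : 0 < B 1 0 := (hrow0 1 (by decide)).2
  have hB20 : 0 < B 2 0 := (hrow0 2 (by decide)).2
  have hB30 : 0 < B 3 0 := (hrow0 3 (by decide)).2
  have hB12 : B 1 2 < 0 := hoffneg 1 2 (by decide) (by decide) (by decide)
  have hB13 : B 1 3 < 0 := hoffneg 1 3 (by decide) (by decide) (by decide)
  have hB21 : B 2 1 < 0 := hoffneg 2 1 (by decide) (by decide) (by decide)
  have hB23 : B 2 3 < 0 := hoffneg 2 3 (by decide) (by decide) (by decide)
  have hB31 : B 3 1 < 0 := hoffneg 3 1 (by decide) (by decide) (by decide)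
  have hB32 : B 3 2 < 0 := hoffneg 3 2 (by decide) (by decide) (by decide)
  have hx0 := hx 0
  have hx1 := hx 1
  have hx2 := hx 2
  have hx3 := hx 3
  have hAe00 : A 0 0 = -(x 0 * B 0 0) := by rw [hAe, hMe]; norm_num [hσdef]
  have hAe01 : A 0 1 = x 0 * B 0 1 := by rw [hAe, hMe]; norm_num [hσdef] <;> ring
  have hAe02 : A 0 2 = x 0 * B 0 2 := by rw [hAe, hMe]; norm_num [hσdef, Matrix.cons_val_two, Matrix.cons_val_three] <;> ring
  have hAe03 : A 0 3 = x 0 * B 0 3 := by rw [hAe, hMe]; norm_num [hσdef, Matrix.cons_val_two, Matrix.cons_val_three] <;> ring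
  have hAe10 : A 1 0 = x 1 * B 1 0 := by rw [hAe, hMe]; norm_num [hσdef] <;> ring
  have hAe11 : A 1 1 = -(x 1 * B 1 1) := by rw [hAe, hMe]; norm_num [hσdef]
  have hAe12 : A 1 2 = -(x 1 * B 1 2) := by rw [hAe, hMe]; norm_num [hσdef, Matrix.cons_val_two, Matrix.cons_val_three]
  have hAe13 : A 1 3 = -(x 1 * B 1 3) := by rw [hAe, hMe]; norm_num [hσdef, Matrix.cons_val_two, Matrix.cons_val_three]
  have hAe20 : A 2 0 = x 2 * B 2 0 := by rw [hAe, hMe]; norm_num [hσdef, Matrix.cons_val_two, Matrix.cons_val_three] <;> ring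
  have hAe21 : A 2 1 = -(x 2 * B 2 1) := by rw [hAe, hMe]; norm_num [hσdef, Matrix.cons_val_two, Matrix.cons_val_three]
  have hAe22 : A 2 2 = -(x 2 * B 2 2) := by rw [hAe, hMe]; norm_num [hσdef, Matrix.cons_val_two, Matrix.cons_val_three]
  have hAe23 : A 2 3 = -(x 2 * B 2 3) := by rw [hAe, hMe]; norm_num [hσdef, Matrix.cons_val_two, Matrix.cons_val_three]
  have hAe30 : A 3 0 = x 3 * B 3 0 := by rw [hAe, hMe]; norm_num [hσdef, Matrix.cons_val_two, Matrix.cons_val_three] <;> ring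
  have hAe31 : A 3 1 = -(x 3 * B 3 1) := by rw [hAe, hMe]; norm_num [hσdef, Matrix.cons_val_two, Matrix.cons_val_three]
  have hAe32 : A 3 2 = -(x 3 * B 3 2) := by rw [hAe, hMe]; norm_num [hσdef, Matrix.cons_val_two, Matrix.cons_val_three]
  have hAe33 : A 3 3 = -(x 3 * B 3 3) := by rw [hAe, hMe]; norm_num [hσdef, Matrix.cons_val_two, Matrix.cons_val_three]
  have hA01 : 0 < A 0 1 := by rw [hAe01]; exact mul_pos hx0 hB01
  have hA10 : 0 < A 1 0 := by rw [hAe10]; exact mul_pos hx1 hB10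
  have hA02 : 0 < A 0 2 := by rw [hAe02]; exact mul_pos hx0 hB02
  have hA20 : 0 < A 2 0 := by rw [hAe20]; exact mul_pos hx2 hB20
  have hA03 : 0 < A 0 3 := by rw [hAe03]; exact mul_pos hx0 hB03
  have hA30 : 0 < A 3 0 := by rw [hAe30]; exact mul_pos hx3 hB30
  have hA12 : 0 < A 1 2 := by
    rw [hAe12]; exact neg_pos.mpr (mul_neg_of_pos_of_neg hx1 hB12)
  have hA13 : 0 < A 1 3 := by
    rw [hAe13]; exact neg_pos.mpr (mul_neg_of_pos_of_neg hx1 hB13)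
  have hA21 : 0 < A 2 1 := by
    rw [hAe21]; exact neg_pos.mpr (mul_neg_of_pos_of_neg hx2 hB21)
  have hA23 : 0 < A 2 3 := by
    rw [hAe23]; exact neg_pos.mpr (mul_neg_of_pos_of_neg hx2 hB23)
  have hA31 : 0 < A 3 1 := by
    rw [hAe31]; exact neg_pos.mpr (mul_neg_of_pos_of_neg hx3 hB31)
  have hA32 : 0 < A 3 2 := by
    rw [hAe32]; exact neg_pos.mpr (mul_neg_of_pos_of_neg hx3 hB32)
  have hAoff : ∀ i j : Fin 4, i ≠ j → 0 < A i j := by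
    intro i j hij
    fin_cases i <;> fin_cases j <;>
      first
        | exact absurd rfl hij
        | exact hA01 | exact hA02 | exact hA03
        | exact hA10 | exact hA20 | exact hA30
        | exact hA12 | exact hA13 | exact hA21
        | exact hA23 | exact hA31 | exact hA32
  -- the positive vector w with A w > 0
  set ε : ℝ := (x 0 * B 0 1 * x 1 + x 0 * B 0 2 * x 2 + x 0 * B 0 3 * x 3) /
      (2 * (x 0 * B 0 0)) with hεdef
  have hc0pos : 0 < x 0 * B 0 1 * x 1 + x 0 * B 0 2 * x 2 + x 0 * B 0 3 * x 3 :=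
    add_pos (add_pos (mul_pos (mul_pos hx0 hB01) hx1) (mul_pos (mul_pos hx0 hB02) hx2))
      (mul_pos (mul_pos hx0 hB03) hx3)
  have hd00 : 0 < x 0 * B 0 0 := mul_pos hx0 (hdiag 0)
  have hεpos : 0 < ε := div_pos hc0pos (by linarith)
  have hε2 : x 0 * B 0 0 * ε
      = (x 0 * B 0 1 * x 1 + x 0 * B 0 2 * x 2 + x 0 * B 0 3 * x 3) / 2 := by
    rw [hεdef]; have := (hdiag 0).ne'; field_simp
  clear_value ε
  clear hεdef
  set w : Fin 4 → ℝ := ![ε, x 1, x 2, x 3] with hwdef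
  clear_value w
  have hw0 : w 0 = ε := by rw [hwdef]; simp
  have hw1 : w 1 = x 1 := by rw [hwdef]; simp
  have hw2 : w 2 = x 2 := by rw [hwdef]; simp
  have hw3 : w 3 = x 3 := by rw [hwdef]; simp
  have hwpos : ∀ i, 0 < w i := by
    intro i
    rw [hwdef]
    fin_cases i
    · simpa using hεpos
    · simpa using hx1
    · simpa using hx2
    · simpa using hx3
  have hmv : ∀ i : Fin 4, A.mulVec w i
      = A i 0 * ε + A i 1 * x 1 + A i 2 * x 2 + A i 3 * x 3 := by
    intro i
    rw [Matrix.mulVec, dotProduct, Fin.sum_univ_four, hw0, hw1, hw2, hw3]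
  have hAw0 : 0 < A.mulVec w 0 := by
    rw [hmv 0, hAe00, hAe01, hAe02, hAe03]
    linarith [hε2, hc0pos]
  have hAw1 : 0 < A.mulVec w 1 := by
    rw [hmv 1, hAe10, hAe11, hAe12, hAe13]
    have h1 := hrow 1 (by decide) ha1
    linarith [mul_pos (mul_pos hx1 hB10) hεpos, mul_pos hx1 (neg_pos.mpr h1)]
  have hAw2 : 0 < A.mulVec w 2 := by
    rw [hmv 2, hAe20, hAe21, hAe22, hAe23]
    have h1 := hrow 2 (by decide) ha2
    linarith [mul_pos (mul_pos hx2 hB20) hεpos, mul_pos hx2 (neg_pos.mpr h1)]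
  have hAw3 : 0 < A.mulVec w 3 := by
    rw [hmv 3, hAe30, hAe31, hAe32, hAe33]
    have h1 := hrow 3 (by decide) ha3
    linarith [mul_pos (mul_pos hx3 hB30) hεpos, mul_pos hx3 (neg_pos.mpr h1)]
  have hAw : ∀ i, 0 < A.mulVec w i := by
    intro i
    fin_cases i
    · exact hAw0
    · exact hAw1
    · exact hAw2
    · exact hAw3
  obtain ⟨t, ht, hdet⟩ := metzler_nonneg_root A hAoff w hwpos hAw
  rw [hdet_conj t] at hdet
  exact hnoroot t ht hdet
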